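/- Let d ≥ 1, and consider the deep decoder with d layers. Assume ξ ≥ 0, μ ≥ 1, that the fixed input matrix satisfies ‖B₁‖_F ≤ ξ, and that every upsampling matrix satisfies ‖Uᵢ‖ ≤ 1 in spectral norm. Let C = (C₁,…,C_{d−1},c_d) and C′ = (C₁′,…,C_{d−1}′,c_d′) be two coefficient tuples with ‖Cᵢ‖_F ≤ μ and ‖Cᵢ′‖_F ≤ μ for all i = 1,…,d−1, and let B_d, B_d′ denote the corresponding final layer matrices (built from the same input B₁). Then ‖B_d − B_d′‖_F ≤ ξ · μ^{d−1} · Σ_{i=1}^{d−1} ‖Cᵢ − Cᵢ′‖_F. -/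

import Mathlib

open Matrix Finset

/-- Euclidean (ℓ₂) norm of a vector. -/
noncomputable def euclNorm {ι : Type*} [Fintype ι] (v : ι → ℝ) : ℝ :=
  Real.sqrt (∑ i, v i ^ 2)

/-- Frobenius norm of a matrix. -/
noncomputable def frobNorm {ι κ : Type*} [Fintype ι] [Fintype κ] (A : Matrix ι κ ℝ) : ℝ :=
  Real.sqrt (∑ i, ∑ j, A i j ^ 2)

/-- Spectral (operator ℓ₂ → ℓ₂) norm of a matrix. -/
noncomputable def specNorm {ι κ : Type*} [Fintype ι] [Fintype κ] (A : Matrix ι κ ℝ) : ℝ :=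
  sSup {r : ℝ | ∃ v : κ → ℝ, euclNorm v ≤ 1 ∧ r = euclNorm (A *ᵥ v)}

/-- Entrywise ReLU of a matrix. -/
def reluM {ι κ : Type*} (A : Matrix ι κ ℝ) : Matrix ι κ ℝ :=
  Matrix.of fun i j => max (A i j) 0

section helpers

variable {ι κ τ : Type*} [Fintype ι] [Fintype κ] [Fintype τ]

lemma le_of_sq_le' {a b : ℝ} (hb : 0 ≤ b) (h : a ^ 2 ≤ b ^ 2) (ha : 0 ≤ a) : a ≤ b := by
  nlinarith

lemma euclNorm_nonneg (v : ι → ℝ) : 0 ≤ euclNorm v := Real.sqrt_nonneg _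

lemma frobNorm_nonneg (A : Matrix ι κ ℝ) : 0 ≤ frobNorm A := Real.sqrt_nonneg _

lemma sq_euclNorm (v : ι → ℝ) : euclNorm v ^ 2 = ∑ i, v i ^ 2 :=
  Real.sq_sqrt (by positivity)

lemma sq_frobNorm (A : Matrix ι κ ℝ) : frobNorm A ^ 2 = ∑ i, ∑ j, A i j ^ 2 :=
  Real.sq_sqrt (by positivity)

lemma euclNorm_smul (c : ℝ) (v : ι → ℝ) : euclNorm (c • v) = |c| * euclNorm v := by
  unfold euclNorm
  rw [← Real.sqrt_sq_eq_abs, ← Real.sqrt_mul (sq_nonneg c), Finset.mul_sum]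
  congr 1
  refine Finset.sum_congr rfl fun i _ => ?_
  simp [mul_pow]

lemma euclNorm_eq_zero {v : ι → ℝ} (h : euclNorm v = 0) : v = 0 := by
  have h2 : ∑ i, v i ^ 2 = 0 := by
    have := sq_euclNorm v; rw [h] at this; simpa using this.symm
  funext i
  have := (Finset.sum_eq_zero_iff_of_nonneg (fun i _ => sq_nonneg (v i))).1 h2 i (mem_univ i)
  exact pow_eq_zero_iff (by norm_num) |>.1 this

lemma frobNorm_le_of_sq_le {A B : Matrix ι κ ℝ}
    (h : ∀ i j, A i j ^ 2 ≤ B i j ^ 2) : frobNorm A ≤ frobNorm B :=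
  Real.sqrt_le_sqrt (Finset.sum_le_sum fun i _ => Finset.sum_le_sum fun j _ => h i j)

lemma frobNorm_relu_sub (X Y : Matrix ι κ ℝ) :
    frobNorm (reluM X - reluM Y) ≤ frobNorm (X - Y) := by
  apply frobNorm_le_of_sq_le
  intro i j
  rw [← sq_abs ((reluM X - reluM Y) i j), ← sq_abs ((X - Y) i j)]
  apply pow_le_pow_left₀ (abs_nonneg _)
  simpa [reluM, Matrix.sub_apply] using abs_max_sub_max_le_abs (X i j) (Y i j) 0

lemma frobNorm_relu_le (X : Matrix ι κ ℝ) : frobNorm (reluM X) ≤ frobNorm X := by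
  apply frobNorm_le_of_sq_le
  intro i j
  rw [← sq_abs (reluM X i j), ← sq_abs (X i j)]
  apply pow_le_pow_left₀ (abs_nonneg _)
  simp only [reluM, Matrix.of_apply]
  rcases le_or_gt (X i j) 0 with h | h
  · simp [max_eq_right h]
  · simp [max_eq_left h.le]

lemma frobNorm_mul_le (A : Matrix ι κ ℝ) (B : Matrix κ τ ℝ) :
    frobNorm (A * B) ≤ frobNorm A * frobNorm B := by
  refine le_of_sq_le' (mul_nonneg (frobNorm_nonneg A) (frobNorm_nonneg B)) ?_
    (frobNorm_nonneg _)
  rw [sq_frobNorm, mul_pow, sq_frobNorm, sq_frobNorm]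
  calc ∑ i, ∑ j, (A * B) i j ^ 2
      ≤ ∑ i, ∑ j, (∑ l, A i l ^ 2) * (∑ l, B l j ^ 2) := by
        refine Finset.sum_le_sum fun i _ => Finset.sum_le_sum fun j _ => ?_
        simpa [Matrix.mul_apply] using
          Finset.sum_mul_sq_le_sq_mul_sq Finset.univ (fun l => A i l) (fun l => B l j)
    _ = (∑ i, ∑ l, A i l ^ 2) * (∑ j, ∑ l, B l j ^ 2) := by
        rw [Finset.sum_mul_sum]
    _ = (∑ i, ∑ l, A i l ^ 2) * (∑ l, ∑ j, B l j ^ 2) := by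
        rw [Finset.sum_comm (f := fun j l => B l j ^ 2)]

lemma frobNorm_add_le (A B : Matrix ι κ ℝ) :
    frobNorm (A + B) ≤ frobNorm A + frobNorm B := by
  have e : ∀ M : Matrix ι κ ℝ,
      frobNorm M = ‖(WithLp.equiv 2 ((ι × κ) → ℝ)).symm (fun p => M p.1 p.2)‖ := by
    intro M
    rw [EuclideanSpace.norm_eq, frobNorm]
    congr 1
    have h1 : ∀ p : ι × κ, ‖(WithLp.equiv 2 ((ι × κ) → ℝ)).symm (fun p => M p.1 p.2) p‖ ^ 2
        = M p.1 p.2 ^ 2 := fun p => by simp [Real.norm_eq_abs, sq_abs]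
    rw [Finset.sum_congr rfl fun p _ => h1 p, Fintype.sum_prod_type]
  rw [e, e, e]
  have : (WithLp.equiv 2 ((ι × κ) → ℝ)).symm (fun p => (A + B) p.1 p.2)
      = (WithLp.equiv 2 ((ι × κ) → ℝ)).symm (fun p => A p.1 p.2)
        + (WithLp.equiv 2 ((ι × κ) → ℝ)).symm (fun p => B p.1 p.2) := rfl
  rw [this]
  exact norm_add_le _ _

lemma specSet_bdd (A : Matrix ι κ ℝ) :
    ∀ r ∈ {r : ℝ | ∃ v : κ → ℝ, euclNorm v ≤ 1 ∧ r = euclNorm (A *ᵥ v)}, r ≤ frobNorm A := by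
  rintro r ⟨v, hv, rfl⟩
  refine le_of_sq_le' (frobNorm_nonneg A) ?_ (euclNorm_nonneg _)
  rw [sq_euclNorm, sq_frobNorm]
  have hv2 : ∑ j, v j ^ 2 ≤ 1 := by
    have := sq_euclNorm v
    nlinarith [euclNorm_nonneg v]
  calc ∑ i, (A *ᵥ v) i ^ 2
      ≤ ∑ i, (∑ j, A i j ^ 2) * (∑ j, v j ^ 2) := by
        refine Finset.sum_le_sum fun i _ => ?_
        simpa [Matrix.mulVec, dotProduct] using
          Finset.sum_mul_sq_le_sq_mul_sq Finset.univ (fun j => A i j) v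
    _ ≤ ∑ i, (∑ j, A i j ^ 2) * 1 := by
        refine Finset.sum_le_sum fun i _ => ?_
        exact mul_le_mul_of_nonneg_left hv2 (by positivity)
    _ = ∑ i, ∑ j, A i j ^ 2 := by simp

lemma specNorm_nonneg (A : Matrix ι κ ℝ) : 0 ≤ specNorm A := by
  apply le_csSup ⟨frobNorm A, specSet_bdd A⟩
  refine ⟨0, ?_, ?_⟩
  · simp [euclNorm]
  · simp [euclNorm, Matrix.mulVec_zero]

lemma euclNorm_mulVec_le (A : Matrix ι κ ℝ) (v : κ → ℝ) :
    euclNorm (A *ᵥ v) ≤ specNorm A * euclNorm v := by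
  rcases eq_or_lt_of_le (euclNorm_nonneg v) with h | h
  · have hv : v = 0 := euclNorm_eq_zero h.symm
    simp [hv, Matrix.mulVec_zero, euclNorm, ← h]
  · set c := euclNorm v with hc
    have hmem : euclNorm (A *ᵥ (c⁻¹ • v)) ∈
        {r : ℝ | ∃ w : κ → ℝ, euclNorm w ≤ 1 ∧ r = euclNorm (A *ᵥ w)} := by
      refine ⟨c⁻¹ • v, le_of_eq ?_, rfl⟩
      rw [euclNorm_smul, abs_of_pos (inv_pos.2 h), ← hc, inv_mul_cancel₀ h.ne']
    have hle : euclNorm (A *ᵥ (c⁻¹ • v)) ≤ specNorm A :=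
      le_csSup ⟨frobNorm A, specSet_bdd A⟩ hmem
    have key : euclNorm (A *ᵥ v) = c * euclNorm (A *ᵥ (c⁻¹ • v)) := by
      rw [Matrix.mulVec_smul, euclNorm_smul, abs_of_pos (inv_pos.2 h)]
      field_simp
    rw [key, mul_comm (specNorm A) c]
    exact mul_le_mul_of_nonneg_left hle h.le

lemma frobNorm_smulMat_le (A : Matrix ι κ ℝ) (M : Matrix κ τ ℝ) :
    frobNorm (A * M) ≤ specNorm A * frobNorm M := by
  refine le_of_sq_le' (mul_nonneg (specNorm_nonneg A) (frobNorm_nonneg M)) ?_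
    (frobNorm_nonneg _)
  have col : ∀ j, (fun i => (A * M) i j) = A *ᵥ (fun l => M l j) := by
    intro j; funext i; simp [Matrix.mul_apply, Matrix.mulVec, dotProduct]
  have e1 : frobNorm (A * M) ^ 2 = ∑ j, euclNorm (A *ᵥ (fun l => M l j)) ^ 2 := by
    rw [sq_frobNorm, Finset.sum_comm (f := fun i j => (A * M) i j ^ 2)]
    refine Finset.sum_congr rfl fun j _ => ?_
    rw [sq_euclNorm]
    refine Finset.sum_congr rfl fun i _ => ?_
    exact congrArg (· ^ 2) (congrFun (col j) i)
  rw [e1, mul_pow, sq_frobNorm]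
  calc ∑ j, euclNorm (A *ᵥ (fun l => M l j)) ^ 2
      ≤ ∑ j, (specNorm A * euclNorm (fun l => M l j)) ^ 2 := by
        refine Finset.sum_le_sum fun j _ => ?_
        exact pow_le_pow_left₀ (euclNorm_nonneg _) (euclNorm_mulVec_le A _) 2
    _ = specNorm A ^ 2 * ∑ j, euclNorm (fun l => M l j) ^ 2 := by
        rw [Finset.mul_sum]; refine Finset.sum_congr rfl fun j _ => by ring
    _ = specNorm A ^ 2 * ∑ l, ∑ j, M l j ^ 2 := by
        congr 1
        rw [Finset.sum_comm (f := fun l j => M l j ^ 2)]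
        exact Finset.sum_congr rfl fun j _ => sq_euclNorm _

end helpers

set_option maxHeartbeats 1000000 in
/-- For two deep decoders with the same input `B 0` and upsampling matrices but
coefficient matrices `C i` resp. `C' i` (layers 0-indexed, so `B (d-1)` is the paper's `B_d`
and `C i`, `i = 0, …, d-2`, are the paper's `C₁, …, C_{d-1}`), the final layers satisfy
`‖B_d − B_d'‖_F ≤ ξ μ^{d-1} Σ_{i=1}^{d-1} ‖Cᵢ − Cᵢ'‖_F`. -/
theorem deep_decoder_final_layer_perturbation
    (d k : ℕ) (hd : 1 ≤ d) (n : ℕ → ℕ)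
    (ξ μ : ℝ) (hξ : 0 ≤ ξ) (hμ : 1 ≤ μ)
    (U : ∀ i : ℕ, Matrix (Fin (n (i + 1))) (Fin (n i)) ℝ)
    (hU : ∀ i, i < d - 1 → specNorm (U i) ≤ 1)
    (B B' : ∀ i : ℕ, Matrix (Fin (n i)) (Fin k) ℝ)
    (C C' : ℕ → Matrix (Fin k) (Fin k) ℝ)
    (hB1 : frobNorm (B 0) ≤ ξ) (hBB' : B' 0 = B 0)
    (hrec : ∀ i, i < d - 1 → B (i + 1) = reluM (U i * B i * C i))
    (hrec' : ∀ i, i < d - 1 → B' (i + 1) = reluM (U i * B' i * C' i))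
    (hC : ∀ i, i < d - 1 → frobNorm (C i) ≤ μ)
    (hC' : ∀ i, i < d - 1 → frobNorm (C' i) ≤ μ) :
    frobNorm (B (d - 1) - B' (d - 1)) ≤
      ξ * μ ^ (d - 1) * ∑ i ∈ Finset.range (d - 1), frobNorm (C i - C' i) := by
  have hμ0 : (0:ℝ) ≤ μ := le_trans zero_le_one hμ
  -- main induction
  have main : ∀ m, m ≤ d - 1 →
      frobNorm (B' m) ≤ ξ * μ ^ m ∧
      frobNorm (B m - B' m) ≤ ξ * μ ^ m * ∑ i ∈ Finset.range m, frobNorm (C i - C' i) := by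
    intro m
    induction m with
    | zero =>
      intro _
      constructor
      · simpa [hBB'] using hB1
      · have hz : B 0 - B' 0 = 0 := by rw [hBB']; simp
        rw [hz]
        simp [frobNorm]
    | succ m ih =>
      intro hm
      have hm' : m < d - 1 := Nat.lt_of_succ_le hm
      obtain ⟨ihB, ihD⟩ := ih (Nat.le_of_lt hm')
      have hUm := hU m hm'
      have hCm := hC m hm'
      have hC'm := hC' m hm'
      have hΔ : 0 ≤ frobNorm (C m - C' m) := frobNorm_nonneg _
      have hSnn : 0 ≤ ∑ i ∈ Finset.range m, frobNorm (C i - C' i) :=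
        Finset.sum_nonneg fun i _ => frobNorm_nonneg _
      constructor
      · -- bound on ‖B' (m+1)‖
        rw [hrec' m hm']
        calc frobNorm (reluM (U m * B' m * C' m))
            ≤ frobNorm (U m * B' m * C' m) := frobNorm_relu_le _
          _ = frobNorm (U m * (B' m * C' m)) := by rw [Matrix.mul_assoc]
          _ ≤ specNorm (U m) * frobNorm (B' m * C' m) := frobNorm_smulMat_le _ _
          _ ≤ 1 * frobNorm (B' m * C' m) :=
              mul_le_mul_of_nonneg_right hUm (frobNorm_nonneg _)
          _ = frobNorm (B' m * C' m) := one_mul _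
          _ ≤ frobNorm (B' m) * frobNorm (C' m) := frobNorm_mul_le _ _
          _ ≤ (ξ * μ ^ m) * μ :=
              mul_le_mul ihB hC'm (frobNorm_nonneg _) (mul_nonneg hξ (pow_nonneg hμ0 m))
          _ = ξ * μ ^ (m + 1) := by ring
      · -- perturbation bound
        rw [hrec m hm', hrec' m hm']
        have split : U m * B m * C m - U m * B' m * C' m =
            U m * ((B m - B' m) * C m) + U m * (B' m * (C m - C' m)) := by
          simp only [Matrix.mul_sub, Matrix.sub_mul, Matrix.mul_assoc]
          abel
        have t1 : frobNorm (U m * ((B m - B' m) * C m)) ≤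
            (ξ * μ ^ m * ∑ i ∈ Finset.range m, frobNorm (C i - C' i)) * μ := by
          calc frobNorm (U m * ((B m - B' m) * C m))
              ≤ specNorm (U m) * frobNorm ((B m - B' m) * C m) := frobNorm_smulMat_le _ _
            _ ≤ 1 * frobNorm ((B m - B' m) * C m) :=
                mul_le_mul_of_nonneg_right hUm (frobNorm_nonneg _)
            _ = frobNorm ((B m - B' m) * C m) := one_mul _
            _ ≤ frobNorm (B m - B' m) * frobNorm (C m) := frobNorm_mul_le _ _
            _ ≤ (ξ * μ ^ m * ∑ i ∈ Finset.range m, frobNorm (C i - C' i)) * μ :=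
                mul_le_mul ihD hCm (frobNorm_nonneg _)
                  (mul_nonneg (mul_nonneg hξ (pow_nonneg hμ0 m)) hSnn)
        have t2 : frobNorm (U m * (B' m * (C m - C' m))) ≤
            (ξ * μ ^ m) * frobNorm (C m - C' m) := by
          calc frobNorm (U m * (B' m * (C m - C' m)))
              ≤ specNorm (U m) * frobNorm (B' m * (C m - C' m)) := frobNorm_smulMat_le _ _
            _ ≤ 1 * frobNorm (B' m * (C m - C' m)) :=
                mul_le_mul_of_nonneg_right hUm (frobNorm_nonneg _)
            _ = frobNorm (B' m * (C m - C' m)) := one_mul _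
            _ ≤ frobNorm (B' m) * frobNorm (C m - C' m) := frobNorm_mul_le _ _
            _ ≤ (ξ * μ ^ m) * frobNorm (C m - C' m) :=
                mul_le_mul_of_nonneg_right ihB hΔ
        calc frobNorm (reluM (U m * B m * C m) - reluM (U m * B' m * C' m))
            ≤ frobNorm (U m * B m * C m - U m * B' m * C' m) := frobNorm_relu_sub _ _
          _ = frobNorm (U m * ((B m - B' m) * C m) + U m * (B' m * (C m - C' m))) := by
              rw [split]
          _ ≤ frobNorm (U m * ((B m - B' m) * C m)) +
              frobNorm (U m * (B' m * (C m - C' m))) := frobNorm_add_le _ _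
          _ ≤ (ξ * μ ^ m * ∑ i ∈ Finset.range m, frobNorm (C i - C' i)) * μ +
              (ξ * μ ^ m) * frobNorm (C m - C' m) := add_le_add t1 t2
          _ ≤ ξ * μ ^ (m + 1) * ∑ i ∈ Finset.range (m + 1), frobNorm (C i - C' i) := by
              rw [Finset.sum_range_succ]
              have h1 : (ξ * μ ^ m) * frobNorm (C m - C' m) ≤
                  (ξ * μ ^ (m + 1)) * frobNorm (C m - C' m) := by
                apply mul_le_mul_of_nonneg_right _ hΔ
                have : μ ^ m ≤ μ ^ (m + 1) := pow_le_pow_right₀ hμ (Nat.le_succ m)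
                nlinarith
              have he : (ξ * μ ^ m * ∑ i ∈ Finset.range m, frobNorm (C i - C' i)) * μ
                  = ξ * μ ^ (m + 1) * ∑ i ∈ Finset.range m, frobNorm (C i - C' i) := by
                rw [pow_succ]; ring
              rw [mul_add]
              linarith [h1, he]
  exact (main (d - 1) le_rfl).2
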